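/- Let A be a C*-algebra, let n ≥ 1, and let (a_{ij}) ∈ M_n(A). Then ‖(a_{ij})‖ = sup { ‖∑_{i=1}^n ∑_{j=1}^n x_i* a_{ij} y_j‖ : x_1, …, x_n, y_1, …, y_n ∈ A with ‖∑_{i=1}^n x_i* x_i‖ ≤ 1 and ‖∑_{i=1}^n y_i* y_i‖ ≤ 1 }, where the norm on the left is the canonical C*-norm of M_n(A) and the supremum on the right is taken in ℝ (the set of values is nonempty, as the zero tuples qualify, and bounded above). -/

import Mathlib

open scoped CStarAlgebra WithCStarModule

/-- The norm of a vector `v ∈ Aⁿ` in the standard Hilbert `A`-module `Aⁿ` over a C⋆-algebra `A`,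
namely `‖v‖ = ‖∑ i, vᵢ* vᵢ‖ ^ (1/2)` (coming from the `A`-valued inner product
`⟪v, w⟫ = ∑ i, vᵢ* wᵢ`). -/
noncomputable def hilbertModulePiNorm {A : Type*} [NonUnitalNormedRing A] [StarRing A]
    {n : ℕ} (v : Fin n → A) : ℝ :=
  Real.sqrt ‖∑ i, star (v i) * v i‖

/-- The canonical C⋆-norm on `Mₙ(A)` for a C⋆-algebra `A`: the operator norm of the action of a
matrix on the standard Hilbert `A`-module `Aⁿ` by matrix-vector multiplication. -/
noncomputable def matrixCStarNorm {A : Type*} [NonUnitalNormedRing A] [StarRing A]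
    {n : ℕ} (M : Matrix (Fin n) (Fin n) A) : ℝ :=
  sSup {r : ℝ | ∃ v : Fin n → A, hilbertModulePiNorm v ≤ 1 ∧ r = hilbertModulePiNorm (M.mulVec v)}

section Aux

variable {A : Type*} [NonUnitalCStarAlgebra A] {n : ℕ}

lemma hilbertModulePiNorm_nonneg (v : Fin n → A) : 0 ≤ hilbertModulePiNorm v :=
  Real.sqrt_nonneg _

lemma sq_hilbertModulePiNorm (v : Fin n → A) :
    hilbertModulePiNorm v ^ 2 = ‖∑ i, star (v i) * v i‖ :=
  Real.sq_sqrt (norm_nonneg _)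

/-- Cauchy–Schwarz for the `A`-valued inner product on `Aⁿ`. -/
lemma hilbertCS (x z : Fin n → A) :
    ‖∑ i, star (x i) * z i‖ ≤ hilbertModulePiNorm x * hilbertModulePiNorm z := by
  let B := A⁺¹
  letI : PartialOrder B := CStarAlgebra.spectralOrder B
  haveI : StarOrderedRing B := CStarAlgebra.spectralOrderedRing B
  let X : C⋆ᵐᵒᵈ(B, Fin n → B) := (WithCStarModule.equiv B _).symm (fun i => (star (x i) : B))
  let Z : C⋆ᵐᵒᵈ(B, Fin n → B) := (WithCStarModule.equiv B _).symm (fun i => (star (z i) : B))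
  have key : ∀ u v : Fin n → A,
      (inner B ((WithCStarModule.equiv B _).symm (fun i => (star (v i) : B)))
        ((WithCStarModule.equiv B _).symm (fun i => (star (u i) : B))) : B)
        = ((∑ i, star (u i) * v i : A) : B) := by
    intro u v
    rw [WithCStarModule.pi_inner]
    have hsum : ((∑ i, star (u i) * v i : A) : B) = ∑ i, ((star (u i) * v i : A) : B) :=
      map_sum (Unitization.inrNonUnitalStarAlgHom ℂ A) _ Finset.univ
    rw [hsum]
    simp [WithCStarModule.inner_def, WithCStarModule.equiv_symm_pi_apply,
      Unitization.inr_mul, Unitization.inr_star]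
  have hnorm : ∀ u : Fin n → A,
      ‖(WithCStarModule.equiv B (Fin n → B)).symm (fun i => (star (u i) : B))‖ = hilbertModulePiNorm u := by
    intro u
    rw [CStarModule.norm_eq_sqrt_norm_inner_self (A := B), key u u, Unitization.norm_inr,
      hilbertModulePiNorm]
  calc ‖∑ i, star (x i) * z i‖ = ‖(inner B Z X : B)‖ := by
        rw [key x z, Unitization.norm_inr]
    _ ≤ ‖Z‖ * ‖X‖ := CStarModule.norm_inner_le _
    _ = hilbertModulePiNorm x * hilbertModulePiNorm z := by rw [hnorm, hnorm, mul_comm]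

lemma norm_apply_le_hilbert (x : Fin n → A) (j : Fin n) : ‖x j‖ ≤ hilbertModulePiNorm x := by
  have h := hilbertCS x (Pi.single j (x j))
  have h1 : ∑ i, star (x i) * (Pi.single j (x j) : Fin n → A) i = star (x j) * x j := by
    rw [Finset.sum_eq_single j] <;> simp_all
  have h2 : hilbertModulePiNorm (Pi.single j (x j)) = ‖x j‖ := by
    have : ∑ i, star ((Pi.single j (x j) : Fin n → A) i) * (Pi.single j (x j) : Fin n → A) i = star (x j) * x j := by
      rw [Finset.sum_eq_single j] <;> simp_all
    rw [hilbertModulePiNorm, this, CStarRing.norm_star_mul_self, ← sq,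
      Real.sqrt_sq (norm_nonneg _)]
  rw [h1, h2, CStarRing.norm_star_mul_self] at h
  rcases eq_or_lt_of_le (norm_nonneg (x j)) with h0 | h0
  · rw [← h0]; exact hilbertModulePiNorm_nonneg x
  · exact le_of_mul_le_mul_right (by linarith) h0

lemma hilbert_le_one_iff (x : Fin n → A) :
    hilbertModulePiNorm x ≤ 1 ↔ ‖∑ i, star (x i) * x i‖ ≤ 1 := by
  rw [hilbertModulePiNorm]
  constructor
  · intro h
    have := Real.sq_sqrt (norm_nonneg (∑ i, star (x i) * x i))
    nlinarith [Real.sqrt_nonneg ‖∑ i, star (x i) * x i‖]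
  · intro h
    simpa using Real.sqrt_le_sqrt h

end Aux

/-- For a C⋆-algebra `A`, `n ≥ 1` and `(aᵢⱼ) ∈ Mₙ(A)`, the canonical C⋆-norm
of `(aᵢⱼ)` equals the supremum of `‖∑ᵢ∑ⱼ xᵢ* aᵢⱼ yⱼ‖` over all tuples `x, y ∈ Aⁿ` with
`‖∑ xᵢ* xᵢ‖ ≤ 1` and `‖∑ yᵢ* yᵢ‖ ≤ 1`. -/
theorem matrixCStarNorm_eq_sSup {A : Type*} [NonUnitalCStarAlgebra A] {n : ℕ} (hn : 1 ≤ n)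
    (a : Matrix (Fin n) (Fin n) A) :
    matrixCStarNorm a =
      sSup {r : ℝ | ∃ x y : Fin n → A,
        ‖∑ i, star (x i) * x i‖ ≤ 1 ∧ ‖∑ i, star (y i) * y i‖ ≤ 1 ∧
        r = ‖∑ i, ∑ j, star (x i) * a i j * y j‖} := by
  set S1 := {r : ℝ | ∃ v : Fin n → A,
    hilbertModulePiNorm v ≤ 1 ∧ r = hilbertModulePiNorm (a.mulVec v)} with hS1def
  set S2 := {r : ℝ | ∃ x y : Fin n → A,
    ‖∑ i, star (x i) * x i‖ ≤ 1 ∧ ‖∑ i, star (y i) * y i‖ ≤ 1 ∧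
    r = ‖∑ i, ∑ j, star (x i) * a i j * y j‖} with hS2def
  have hdsum : ∀ x y : Fin n → A,
      ∑ i, ∑ j, star (x i) * a i j * y j = ∑ i, star (x i) * a.mulVec y i := by
    intro x y
    simp [Matrix.mulVec, dotProduct, Finset.mul_sum, mul_assoc]
  have h0 : (0 : ℝ) ∈ S1 := by
    refine ⟨0, ?_, ?_⟩ <;> simp [hilbertModulePiNorm, Matrix.mulVec_zero]
  have hsub : S1 ⊆ S2 := by
    rintro r ⟨v, hv, rfl⟩
    set w := a.mulVec v with hw
    set s := hilbertModulePiNorm w with hs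
    have hs0 : 0 ≤ s := hilbertModulePiNorm_nonneg w
    rcases eq_or_lt_of_le hs0 with h0' | h0'
    · exact ⟨0, 0, by simp, by simp, by simp [← h0']⟩
    · refine ⟨fun i => ((s⁻¹ : ℝ) : ℂ) • w i, v, ?_, (hilbert_le_one_iff v).mp hv, ?_⟩
      · have : ∑ i, star (((s⁻¹ : ℝ) : ℂ) • w i) * (((s⁻¹ : ℝ) : ℂ) • w i)
            = (((s⁻¹ : ℝ) : ℂ) * ((s⁻¹ : ℝ) : ℂ)) • ∑ i, star (w i) * w i := by
          rw [Finset.smul_sum]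
          congr 1; ext i
          rw [star_smul, smul_mul_smul_comm]
          simp
        rw [this, norm_smul]
        have := sq_hilbertModulePiNorm w
        simp only [norm_mul, Complex.norm_real, Real.norm_eq_abs,
          abs_of_nonneg (inv_nonneg.mpr hs0)]
        rw [← this]
        rw [show s⁻¹ * s⁻¹ * s ^ 2 = (s⁻¹ * s) ^ 2 by ring, inv_mul_cancel₀ (ne_of_gt h0')]
        norm_num
      · rw [hdsum]
        have : ∑ i, star (((s⁻¹ : ℝ) : ℂ) • w i) * a.mulVec v i
            = ((s⁻¹ : ℝ) : ℂ) • ∑ i, star (w i) * w i := by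
          rw [Finset.smul_sum]
          congr 1; ext i
          rw [← hw, star_smul, smul_mul_assoc]
          simp
        rw [this, norm_smul]
        have hsq := sq_hilbertModulePiNorm w
        simp only [Complex.norm_real, Real.norm_eq_abs, abs_of_nonneg (inv_nonneg.mpr hs0)]
        rw [← hsq, sq]
        rw [← mul_assoc, inv_mul_cancel₀ (ne_of_gt h0'), one_mul]
  have hbdd2 : BddAbove S2 := by
    refine ⟨∑ i, ∑ j, ‖a i j‖, ?_⟩
    rintro r ⟨x, y, hx, hy, rfl⟩
    have hx1 : ∀ i, ‖x i‖ ≤ 1 :=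
      fun i => (norm_apply_le_hilbert x i).trans ((hilbert_le_one_iff x).mpr hx)
    have hy1 : ∀ j, ‖y j‖ ≤ 1 :=
      fun j => (norm_apply_le_hilbert y j).trans ((hilbert_le_one_iff y).mpr hy)
    calc ‖∑ i, ∑ j, star (x i) * a i j * y j‖
        ≤ ∑ i, ∑ j, ‖star (x i) * a i j * y j‖ := by
          refine (norm_sum_le _ _).trans (Finset.sum_le_sum fun i _ => norm_sum_le _ _)
      _ ≤ ∑ i, ∑ j, ‖a i j‖ := by
          refine Finset.sum_le_sum fun i _ => Finset.sum_le_sum fun j _ => ?_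
          calc ‖star (x i) * a i j * y j‖ ≤ ‖star (x i) * a i j‖ * ‖y j‖ := norm_mul_le _ _
            _ ≤ ‖star (x i)‖ * ‖a i j‖ * ‖y j‖ := by
                gcongr; exact norm_mul_le _ _
            _ ≤ 1 * ‖a i j‖ * 1 := by
                rw [norm_star]
                gcongr
                · exact hx1 i
                · exact hy1 j
            _ = ‖a i j‖ := by ring
  have hbdd1 : BddAbove S1 := hbdd2.mono hsub
  rw [matrixCStarNorm, ← hS1def]
  refine le_antisymm (csSup_le_csSup hbdd2 ⟨0, h0⟩ hsub) ?_
  refine csSup_le ⟨0, hsub h0⟩ ?_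
  rintro r ⟨x, y, hx, hy, rfl⟩
  have hmem : hilbertModulePiNorm (a.mulVec y) ∈ S1 :=
    ⟨y, (hilbert_le_one_iff y).mpr hy, rfl⟩
  refine le_trans ?_ (le_csSup hbdd1 hmem)
  rw [hdsum]
  calc ‖∑ i, star (x i) * a.mulVec y i‖
      ≤ hilbertModulePiNorm x * hilbertModulePiNorm (a.mulVec y) := hilbertCS _ _
    _ ≤ 1 * hilbertModulePiNorm (a.mulVec y) := by
        gcongr
        · exact hilbertModulePiNorm_nonneg _
        · exact (hilbert_le_one_iff x).mpr hx
    _ = _ := one_mul _
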